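/- Let h : X × X* → ℝ∪{+∞} be a convex function. Then h satisfies h(x,x*) ≥ ⟨x,x*⟩ for all (x,x*) ∈ X × X* together with h*(x*,x**) ≥ ⟨x*,x**⟩ for all (x*,x**) ∈ X* × X** if, and only if, for every (x₀,x₀*) ∈ X × X* one has inf_{(x,x*)∈X×X*} ( h_{(x₀,x₀*)}(x,x*) + ½‖x‖² + ½‖x*‖² ) = 0. -/

import Mathlib

noncomputable section

open NormedSpace

/-- The translate `h_{(x₀,x₀*)}` of a function on `X × X*`. -/
def transl {X : Type*} [NormedAddCommGroup X] [NormedSpace ℝ X]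
    (h : X × (X →L[ℝ] ℝ) → EReal) (w : X × (X →L[ℝ] ℝ)) :
    X × (X →L[ℝ] ℝ) → EReal :=
  fun p => h (p.1 + w.1, p.2 + w.2) - ((w.2 p.1 + p.2 w.1 + w.2 w.1 : ℝ) : EReal)

/-- The translate of a function on `X* × X**`. -/
def translD {X : Type*} [NormedAddCommGroup X] [NormedSpace ℝ X]
    (g : (X →L[ℝ] ℝ) × ((X →L[ℝ] ℝ) →L[ℝ] ℝ) → EReal)
    (v : (X →L[ℝ] ℝ) × ((X →L[ℝ] ℝ) →L[ℝ] ℝ)) :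
    (X →L[ℝ] ℝ) × ((X →L[ℝ] ℝ) →L[ℝ] ℝ) → EReal :=
  fun q => g (q.1 + v.1, q.2 + v.2) - ((v.2 q.1 + q.2 v.1 + v.2 v.1 : ℝ) : EReal)

/-- The conjugate `h* : X* × X** → ℝ ∪ {±∞}`,
`h*(x*,x**) = sup_{(y,y*)} ⟨y,x*⟩ + ⟨y*,x**⟩ − h(y,y*)`. -/
def conj {X : Type*} [NormedAddCommGroup X] [NormedSpace ℝ X]
    (h : X × (X →L[ℝ] ℝ) → EReal) :
    (X →L[ℝ] ℝ) × ((X →L[ℝ] ℝ) →L[ℝ] ℝ) → EReal :=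
  fun q => ⨆ p : X × (X →L[ℝ] ℝ), (((q.1 p.1 + q.2 p.2 : ℝ) : EReal) - h p)

/-- Convexity of an `EReal`-valued function. -/
def ConvexE {X : Type*} [NormedAddCommGroup X] [NormedSpace ℝ X]
    (h : X × (X →L[ℝ] ℝ) → EReal) : Prop :=
  ∀ p q : X × (X →L[ℝ] ℝ), ∀ a b : ℝ, 0 ≤ a → 0 ≤ b → a + b = 1 →
    h (a • p + b • q) ≤ (a : EReal) * h p + (b : EReal) * h q

/-- The auxiliary condition:
`inf_{(x,x*)} h_{(x₀,x₀*)}(x,x*) + ½‖x‖² + ½‖x*‖² = 0` for all `(x₀,x₀*)`. -/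
def AuxCond {X : Type*} [NormedAddCommGroup X] [NormedSpace ℝ X]
    (h : X × (X →L[ℝ] ℝ) → EReal) : Prop :=
  ∀ w : X × (X →L[ℝ] ℝ),
    (⨅ p : X × (X →L[ℝ] ℝ),
      (transl h w p + ((‖p.1‖ ^ 2 / 2 + ‖p.2‖ ^ 2 / 2 : ℝ) : EReal))) = 0

/-- Monotone operator (identified with its graph). -/
def MonotoneSet {X : Type*} [NormedAddCommGroup X] [NormedSpace ℝ X]
    (T : Set (X × (X →L[ℝ] ℝ))) : Prop :=
  ∀ p ∈ T, ∀ q ∈ T, 0 ≤ (p.2 - q.2) (p.1 - q.1)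

/-- Maximal monotone operator. -/
def MaximalMonotone {X : Type*} [NormedAddCommGroup X] [NormedSpace ℝ X]
    (T : Set (X × (X →L[ℝ] ℝ))) : Prop :=
  MonotoneSet T ∧ ∀ S : Set (X × (X →L[ℝ] ℝ)), MonotoneSet S → T ⊆ S → S = T

/-- The Fitzpatrick family of `T`. -/
def FitzFamily {X : Type*} [NormedAddCommGroup X] [NormedSpace ℝ X]
    (T : Set (X × (X →L[ℝ] ℝ))) : Set (X × (X →L[ℝ] ℝ) → EReal) :=
  {h | ConvexE h ∧ LowerSemicontinuous h ∧
      (∀ p : X × (X →L[ℝ] ℝ), (p.2 p.1 : EReal) ≤ h p) ∧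
      ∀ p ∈ T, h p = (p.2 p.1 : EReal)}

/-- `T` is of type (NI): `inf_{(y,y*)∈T} ⟨x*−y*, x**−Jy⟩ ≤ 0` for all `(x*,x**)`. -/
def TypeNI {X : Type*} [NormedAddCommGroup X] [NormedSpace ℝ X]
    (T : Set (X × (X →L[ℝ] ℝ))) : Prop :=
  ∀ q : (X →L[ℝ] ℝ) × ((X →L[ℝ] ℝ) →L[ℝ] ℝ),
    (⨅ p : T, (((q.2 - inclusionInDoubleDual ℝ X p.1.1) (q.1 - p.1.2) : ℝ) : EReal)) ≤ 0


set_option maxHeartbeats 1000000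



lemma approx_dual {Y : Type*} [NormedAddCommGroup Y] [NormedSpace ℝ Y]
    (q : Y →L[ℝ] ℝ) {δ : ℝ} (hδ : 0 < δ) :
    ∃ x : Y, q x + ‖x‖ ^ 2 / 2 ≤ -‖q‖ ^ 2 / 2 + ‖q‖ * δ := by
  rcases eq_or_lt_of_le (norm_nonneg q) with h0 | h0
  · exact ⟨0, by simp [← h0]⟩
  · set a := ‖q‖ with ha
    have hm : 0 < min δ a := lt_min hδ h0
    have hr : a - min δ a < ‖q‖ := by simp only [← ha]; linarith
    obtain ⟨u, hu1, hu2⟩ := q.exists_lt_apply_of_lt_opNorm hr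
    rw [Real.norm_eq_abs] at hu2
    by_cases hs : 0 ≤ q u
    · refine ⟨(-a) • u, ?_⟩
      rw [map_smul, norm_smul, smul_eq_mul]
      rw [abs_of_nonneg hs] at hu2
      have h3 : ‖(-a : ℝ)‖ = a := by rw [Real.norm_eq_abs, abs_neg, abs_of_nonneg h0.le]
      rw [h3]
      have h4 : a * ‖u‖ ≤ a * 1 := by nlinarith [norm_nonneg u]
      have h5 : min δ a ≤ δ := min_le_left _ _
      nlinarith [norm_nonneg u, mul_lt_mul_of_pos_left hu2 h0,
        mul_le_mul h4 h4 (by positivity) (by positivity), mul_le_mul_of_nonneg_left h5 h0.le]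
    · refine ⟨a • u, ?_⟩
      push_neg at hs
      rw [map_smul, norm_smul, smul_eq_mul]
      rw [abs_of_neg hs] at hu2
      have h3 : ‖(a : ℝ)‖ = a := by rw [Real.norm_eq_abs, abs_of_nonneg h0.le]
      rw [h3]
      have h4 : a * ‖u‖ ≤ a * 1 := by nlinarith [norm_nonneg u]
      have h5 : min δ a ≤ δ := min_le_left _ _
      nlinarith [norm_nonneg u, mul_lt_mul_of_pos_left hu2 h0,
        mul_le_mul h4 h4 (by positivity) (by positivity), mul_le_mul_of_nonneg_left h5 h0.le]

lemma ereal_sub_coe_ne_bot {x : EReal} (hx : x ≠ ⊥) (c : ℝ) : x - (c : EReal) ≠ ⊥ := by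
  induction x using EReal.rec with
  | bot => exact absurd rfl hx
  | coe r => rw [← EReal.coe_sub]; exact EReal.coe_ne_bot _
  | top => rw [EReal.top_sub_coe]; exact top_ne_bot

lemma ereal_sub_coe_ne_top {x : EReal} (hx : x ≠ ⊤) (c : ℝ) : x - (c : EReal) ≠ ⊤ := by
  induction x using EReal.rec with
  | bot => rw [EReal.bot_sub]; exact bot_ne_top
  | coe r => rw [← EReal.coe_sub]; exact EReal.coe_ne_top _
  | top => exact absurd rfl hx


lemma sep_lemma {E : Type*} [NormedAddCommGroup E] [NormedSpace ℝ E]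
    (F : E → EReal) (j : E → ℝ) (μ : ℝ)
    (hFconv : ∀ p q : E, ∀ a b s t : ℝ, 0 ≤ a → 0 ≤ b → a + b = 1 →
      F p ≤ (s : EReal) → F q ≤ (t : EReal) → F (a • p + b • q) ≤ ((a * s + b * t : ℝ) : EReal))
    (hFbot : ∀ p, F p ≠ ⊥) (p₀ : E) (hp₀ : F p₀ ≠ ⊤)
    (hjconv : ∀ p q : E, ∀ a b : ℝ, 0 ≤ a → 0 ≤ b → a + b = 1 →
      j (a • p + b • q) ≤ a * j p + b * j q)
    (hjcont : Continuous j)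
    (hlb : ∀ p, (μ : EReal) ≤ F p + (j p : EReal)) :
    ∃ (Φ : E →L[ℝ] ℝ) (c : ℝ), (∀ p, ((Φ p + c : ℝ) : EReal) ≤ F p) ∧
      ∀ p, μ - j p ≤ Φ p + c := by
  set A : Set (E × ℝ) := {z | z.2 < μ - j z.1} with hA
  set B : Set (E × ℝ) := {z | F z.1 ≤ (z.2 : EReal)} with hB
  have hAopen : IsOpen A :=
    isOpen_lt continuous_snd (continuous_const.sub (hjcont.comp continuous_fst))
  have hAconv : Convex ℝ A := by
    intro z1 hz1 z2 hz2 a b ha hb hab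
    simp only [hA, Set.mem_setOf_eq, Prod.fst_add, Prod.snd_add, Prod.smul_fst,
      Prod.smul_snd, smul_eq_mul] at *
    have hj := hjconv z1.1 z2.1 a b ha hb hab
    rcases eq_or_lt_of_le ha with ha' | ha'
    · have hb1 : b = 1 := by linarith
      rw [← ha', hb1] at *
      simp only [zero_mul, one_mul, zero_smul, one_smul, zero_add] at *
      linarith
    · have h1 : a * z1.2 < a * (μ - j z1.1) := mul_lt_mul_of_pos_left hz1 ha'
      have h2 : b * z2.2 ≤ b * (μ - j z2.1) := mul_le_mul_of_nonneg_left hz2.le hb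
      have e1 : a * (μ - j z1.1) = a*μ - a*j z1.1 := by ring
      have e2 : b * (μ - j z2.1) = b*μ - b*j z2.1 := by ring
      have e3 : a*μ + b*μ = μ := by rw [← add_mul, hab, one_mul]
      linarith
  have hBconv : Convex ℝ B := by
    intro z1 hz1 z2 hz2 a b ha hb hab
    simp only [hB, Set.mem_setOf_eq, Prod.fst_add, Prod.snd_add, Prod.smul_fst,
      Prod.smul_snd, smul_eq_mul] at *
    exact hFconv z1.1 z2.1 a b z1.2 z2.2 ha hb hab hz1 hz2
  have hdisj : Disjoint A B := by
    rw [Set.disjoint_left]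
    intro z hzA hzB
    simp only [hA, hB, Set.mem_setOf_eq] at hzA hzB
    have h1 : F z.1 + (j z.1 : EReal) ≤ ((z.2 + j z.1 : ℝ) : EReal) := by
      rw [EReal.coe_add]; exact add_le_add hzB le_rfl
    have h2 : ((z.2 + j z.1 : ℝ) : EReal) < (μ : EReal) := by
      rw [EReal.coe_lt_coe_iff]; linarith
    exact absurd (hlb z.1) (not_le.2 (lt_of_le_of_lt h1 h2))
  obtain ⟨f, u, hfA, hfB⟩ := geometric_hahn_banach_open hAconv hAopen hBconv hdisj
  set r : ℝ := f (0, 1) with hr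
  set q : E →L[ℝ] ℝ := f.comp (ContinuousLinearMap.inl ℝ E ℝ) with hq
  have hdecomp : ∀ (p : E) (t : ℝ), f (p, t) = q p + t * r := by
    intro p t
    have h1 : (p, t) = ((p, (0:ℝ)) : E × ℝ) + t • ((0:E), (1:ℝ)) := by
      simp [Prod.ext_iff]
    rw [h1, map_add, map_smul, smul_eq_mul, hq]
    simp [ContinuousLinearMap.inl_apply, hr]
  set ρ₀ : ℝ := (F p₀).toReal with hρ₀
  have hFp₀ : F p₀ = (ρ₀ : EReal) := (EReal.coe_toReal hp₀ (hFbot p₀)).symm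
  have hmemB : ((p₀, ρ₀) : E × ℝ) ∈ B := by simp [hB, hFp₀]
  have hrpos : 0 < r := by
    rcases lt_trichotomy r 0 with h | h | h
    · exfalso
      obtain ⟨n, hn⟩ := exists_nat_gt ((u - q p₀ - (μ - j p₀ - 1) * r) / (-r))
      have htA : ((p₀, μ - j p₀ - 1 - n) : E × ℝ) ∈ A := by
        simp only [hA, Set.mem_setOf_eq]
        have : (0:ℝ) ≤ n := Nat.cast_nonneg n
        linarith
      have h2 := hfA _ htA
      rw [hdecomp] at h2
      rw [div_lt_iff₀ (by linarith : (0:ℝ) < -r)] at hn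
      have h3 : (μ - j p₀ - 1 - (n:ℝ)) * r = (μ - j p₀ - 1) * r - (n:ℝ) * r := by ring
      have h4 : (n:ℝ) * -r = -((n:ℝ) * r) := by ring
      rw [h3] at h2; rw [h4] at hn
      linarith
    · exfalso
      have h1 : ∀ p : E, q p < u := by
        intro p
        have htA : ((p, μ - j p - 1) : E × ℝ) ∈ A := by
          simp only [hA, Set.mem_setOf_eq]; linarith
        have h2 := hfA _ htA
        rw [hdecomp, h] at h2
        simpa using h2
      have h2 := hfB _ hmemB
      rw [hdecomp, h] at h2
      simp only [mul_zero, add_zero] at h2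
      exact absurd (h1 p₀) (not_lt.2 h2)
    · exact h
  refine ⟨(-(1/r)) • q, u / r, ?_, ?_⟩
  · intro p
    by_cases hFt : F p = ⊤
    · rw [hFt]; exact le_top
    · have hFp : F p = ((F p).toReal : EReal) := (EReal.coe_toReal hFt (hFbot p)).symm
      set ρ : ℝ := (F p).toReal
      have hmem : ((p, ρ) : E × ℝ) ∈ B := by simp [hB, hFp]
      have h2 := hfB _ hmem
      rw [hdecomp] at h2
      rw [hFp, EReal.coe_le_coe_iff]
      have h3 : ((-(1/r)) • q) p = -(1/r) * q p := by
        simp [ContinuousLinearMap.smul_apply, smul_eq_mul]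
      rw [h3]
      have h4 : (u - q p)/r ≤ ρ := by rw [div_le_iff₀ hrpos]; linarith
      have h5 : -(1/r) * q p + u/r = (u - q p)/r := by field_simp; ring
      linarith
  · intro p
    by_contra hcon
    push_neg at hcon
    have htA : ((p, ((-(1/r)) • q) p + u/r) : E × ℝ) ∈ A := by
      simp only [hA, Set.mem_setOf_eq]; exact hcon
    have h2 := hfA _ htA
    rw [hdecomp] at h2
    have h3 : ((-(1/r)) • q) p = -(1/r) * q p := by
      simp [ContinuousLinearMap.smul_apply, smul_eq_mul]
    rw [h3] at h2
    have h4 : (-(1/r) * q p + u/r) * r = -(q p) + u := by field_simp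
    nlinarith

lemma transl_conv {X : Type*} [NormedAddCommGroup X] [NormedSpace ℝ X]
    (h : X × (X →L[ℝ] ℝ) → EReal) (hbot : ∀ p, h p ≠ ⊥) (hconv : ConvexE h)
    (w : X × (X →L[ℝ] ℝ)) :
    ∀ p q : X × (X →L[ℝ] ℝ), ∀ a b s t : ℝ, 0 ≤ a → 0 ≤ b → a + b = 1 →
      transl h w p ≤ (s : EReal) → transl h w q ≤ (t : EReal) →
      transl h w (a • p + b • q) ≤ ((a * s + b * t : ℝ) : EReal) := by
  intro p q a b s t ha hb hab hps hqt
  have hb' : b = 1 - a := by linarith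
  subst hb'
  set ℓp : ℝ := w.2 p.1 + p.2 w.1 + w.2 w.1 with hℓp
  set ℓq : ℝ := w.2 q.1 + q.2 w.1 + w.2 w.1 with hℓq
  have hP : h (p.1 + w.1, p.2 + w.2) ≤ ((s + ℓp : ℝ) : EReal) := by
    have h1 : transl h w p = h (p.1 + w.1, p.2 + w.2) - (ℓp : EReal) := rfl
    rw [h1] at hps
    rw [EReal.sub_le_iff_le_add (Or.inl (EReal.coe_ne_bot _)) (Or.inl (EReal.coe_ne_top _))] at hps
    rwa [EReal.coe_add]
  have hQ : h (q.1 + w.1, q.2 + w.2) ≤ ((t + ℓq : ℝ) : EReal) := by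
    have h1 : transl h w q = h (q.1 + w.1, q.2 + w.2) - (ℓq : EReal) := rfl
    rw [h1] at hqt
    rw [EReal.sub_le_iff_le_add (Or.inl (EReal.coe_ne_bot _)) (Or.inl (EReal.coe_ne_top _))] at hqt
    rwa [EReal.coe_add]
  set P : X × (X →L[ℝ] ℝ) := (p.1 + w.1, p.2 + w.2) with hPdef
  set Q : X × (X →L[ℝ] ℝ) := (q.1 + w.1, q.2 + w.2) with hQdef
  have hPt : h P ≠ ⊤ := by
    intro hcc; rw [hcc] at hP; exact (EReal.coe_lt_top _).not_ge hP
  have hQt : h Q ≠ ⊤ := by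
    intro hcc; rw [hcc] at hQ; exact (EReal.coe_lt_top _).not_ge hQ
  set rP : ℝ := (h P).toReal with hrP
  set rQ : ℝ := (h Q).toReal with hrQ
  have hPr : h P = (rP : EReal) := (EReal.coe_toReal hPt (hbot P)).symm
  have hQr : h Q = (rQ : EReal) := (EReal.coe_toReal hQt (hbot Q)).symm
  have hrPle : rP ≤ s + ℓp := by rw [hPr] at hP; exact_mod_cast hP
  have hrQle : rQ ≤ t + ℓq := by rw [hQr] at hQ; exact_mod_cast hQ
  have harg : ((a • p + (1-a) • q).1 + w.1, (a • p + (1-a) • q).2 + w.2)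
      = a • P + (1-a) • Q := by
    rw [hPdef, hQdef, Prod.smul_mk, Prod.smul_mk, Prod.mk_add_mk]
    refine Prod.ext ?_ ?_
    · simp only [Prod.fst_add, Prod.smul_fst]
      module
    · simp only [Prod.snd_add, Prod.smul_snd]
      module
  have hℓcombo : w.2 ((a • p + (1-a) • q).1) + ((a • p + (1-a) • q).2) w.1 + w.2 w.1
      = a * ℓp + (1-a) * ℓq := by
    simp only [Prod.fst_add, Prod.snd_add, Prod.smul_fst, Prod.smul_snd, map_add, map_smul,
      ContinuousLinearMap.add_apply, ContinuousLinearMap.smul_apply, smul_eq_mul, hℓp, hℓq]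
    ring
  have h1 : transl h w (a • p + (1-a) • q)
      = h (a • P + (1-a) • Q) - ((a * ℓp + (1-a) * ℓq : ℝ) : EReal) := by
    unfold transl
    rw [harg, hℓcombo]
  rw [h1]
  have h2 := hconv P Q a (1-a) ha (by linarith) (by ring)
  rw [hPr, hQr] at h2
  have h3 : (a : EReal) * (rP : EReal) + ((1-a : ℝ) : EReal) * (rQ : EReal)
      = ((a * rP + (1-a) * rQ : ℝ) : EReal) := by
    rw [← EReal.coe_mul, ← EReal.coe_mul, ← EReal.coe_add]
  rw [h3] at h2
  refine le_trans (EReal.sub_le_sub h2 le_rfl) ?_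
  rw [← EReal.coe_sub, EReal.coe_le_coe_iff]
  have m1 : a * (rP - ℓp) ≤ a * s := by
    have : rP - ℓp ≤ s := by linarith
    exact mul_le_mul_of_nonneg_left this ha
  have m2 : (1-a) * (rQ - ℓq) ≤ (1-a) * t := by
    have h4 : rQ - ℓq ≤ t := by linarith
    exact mul_le_mul_of_nonneg_left h4 (by linarith)
  nlinarith [m1, m2]


theorem stmt_0 {X : Type*} [NormedAddCommGroup X] [NormedSpace ℝ X] [CompleteSpace X]
    (h : X × (X →L[ℝ] ℝ) → EReal) (hbot : ∀ p, h p ≠ ⊥) (hconv : ConvexE h) :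
    ((∀ p : X × (X →L[ℝ] ℝ), (p.2 p.1 : EReal) ≤ h p) ∧
        (∀ q : (X →L[ℝ] ℝ) × ((X →L[ℝ] ℝ) →L[ℝ] ℝ), (q.2 q.1 : EReal) ≤ conj h q)) ↔
      AuxCond h := by
  constructor
  · rintro ⟨hπ, hπs⟩
    intro w
    -- properness
    have hproper : ∃ s, h s ≠ ⊤ := by
      by_contra hc
      push_neg at hc
      have h0 := hπs 0
      have hconj0 : conj h (0 : (X →L[ℝ] ℝ) × ((X →L[ℝ] ℝ) →L[ℝ] ℝ)) = ⊥ := by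
        unfold conj
        refine le_bot_iff.1 (iSup_le fun p => ?_)
        rw [hc p, EReal.sub_top]
      rw [hconj0] at h0
      simp at h0
    have hlow : ∀ p : X × (X →L[ℝ] ℝ), ((p.2 p.1 : ℝ) : EReal) ≤ transl h w p := by
      intro p
      have h1 := hπ (p.1 + w.1, p.2 + w.2)
      have h2 : ((p.2 p.1 : ℝ) : EReal)
          = (((p.2 + w.2) (p.1 + w.1) : ℝ) : EReal) - ((w.2 p.1 + p.2 w.1 + w.2 w.1 : ℝ) : EReal) := by
        rw [← EReal.coe_sub]
        norm_cast
        simp only [ContinuousLinearMap.add_apply, map_add]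
        ring
      rw [h2]
      exact EReal.sub_le_sub h1 le_rfl
    have hnonneg : ∀ p : X × (X →L[ℝ] ℝ),
        (0 : EReal) ≤ transl h w p + ((‖p.1‖ ^ 2 / 2 + ‖p.2‖ ^ 2 / 2 : ℝ) : EReal) := by
      intro p
      have h1 : ((p.2 p.1 + (‖p.1‖ ^ 2 / 2 + ‖p.2‖ ^ 2 / 2) : ℝ) : EReal)
          ≤ transl h w p + ((‖p.1‖ ^ 2 / 2 + ‖p.2‖ ^ 2 / 2 : ℝ) : EReal) := by
        rw [EReal.coe_add]
        exact add_le_add (hlow p) le_rfl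
      refine le_trans ?_ h1
      rw [← EReal.coe_zero, EReal.coe_le_coe_iff]
      have h2 : ‖p.2 p.1‖ ≤ ‖p.2‖ * ‖p.1‖ := p.2.le_opNorm p.1
      rw [Real.norm_eq_abs] at h2
      nlinarith [sq_nonneg (‖p.1‖ - ‖p.2‖), abs_nonneg (p.2 p.1), neg_abs_le (p.2 p.1)]
    refine le_antisymm ?_ (le_iInf hnonneg)
    by_contra hc
    push_neg at hc
    obtain ⟨μ, hμ0, hμi⟩ := EReal.exists_between_coe_real hc
    have hμpos : (0:ℝ) < μ := by exact_mod_cast hμ0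
    have hlb : ∀ p : X × (X →L[ℝ] ℝ),
        (μ : EReal) ≤ transl h w p + ((‖p.1‖ ^ 2 / 2 + ‖p.2‖ ^ 2 / 2 : ℝ) : EReal) :=
      fun p => (hμi.trans_le (iInf_le _ p)).le
    obtain ⟨s0, hs0⟩ := hproper
    have hp₀ : transl h w (s0.1 - w.1, s0.2 - w.2) ≠ ⊤ := by
      unfold transl
      simp only [sub_add_cancel]
      exact ereal_sub_coe_ne_top (by rwa [Prod.mk.eta]) _
    obtain ⟨Φ, c, hΦ1, hΦ2⟩ := sep_lemma (transl h w)
      (fun p => ‖p.1‖ ^ 2 / 2 + ‖p.2‖ ^ 2 / 2) μ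
      (transl_conv h hbot hconv w)
      (fun p => ereal_sub_coe_ne_bot (hbot _) _)
      (s0.1 - w.1, s0.2 - w.2) hp₀
      (by
        intro p q a b ha hb hab
        simp only [Prod.fst_add, Prod.snd_add, Prod.smul_fst, Prod.smul_snd]
        have n1 : ‖a • p.1 + b • q.1‖ ≤ a * ‖p.1‖ + b * ‖q.1‖ := by
          refine le_trans (norm_add_le _ _) ?_
          rw [norm_smul, norm_smul, Real.norm_eq_abs, Real.norm_eq_abs,
            abs_of_nonneg ha, abs_of_nonneg hb]
        have n2 : ‖a • p.2 + b • q.2‖ ≤ a * ‖p.2‖ + b * ‖q.2‖ := by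
          refine le_trans (norm_add_le _ _) ?_
          rw [norm_smul a p.2, norm_smul b q.2, Real.norm_eq_abs, Real.norm_eq_abs,
            abs_of_nonneg ha, abs_of_nonneg hb]
        have s1 : ‖a • p.1 + b • q.1‖ ^ 2 ≤ (a * ‖p.1‖ + b * ‖q.1‖) ^ 2 := by
          have := norm_nonneg (a • p.1 + b • q.1)
          nlinarith
        have s2 : ‖a • p.2 + b • q.2‖ ^ 2 ≤ (a * ‖p.2‖ + b * ‖q.2‖) ^ 2 := by
          have := norm_nonneg (a • p.2 + b • q.2)
          nlinarith
        nlinarith [sq_nonneg (‖p.1‖ - ‖q.1‖), sq_nonneg (‖p.2‖ - ‖q.2‖),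
          mul_nonneg ha hb, sq_nonneg (a+b)])
      (by fun_prop)
      hlb
    set q1 : X →L[ℝ] ℝ := Φ.comp (ContinuousLinearMap.inl ℝ X (X →L[ℝ] ℝ)) with hq1
    set q2 : (X →L[ℝ] ℝ) →L[ℝ] ℝ := Φ.comp (ContinuousLinearMap.inr ℝ X (X →L[ℝ] ℝ)) with hq2
    have hsplit : ∀ p : X × (X →L[ℝ] ℝ), Φ p = q1 p.1 + q2 p.2 := by
      intro p
      have h1 : p = ((p.1, 0) : X × (X →L[ℝ] ℝ)) + (0, p.2) := by
        rw [Prod.mk_add_mk]; simp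
      rw [hq1, hq2]
      conv_lhs => rw [h1]
      rw [map_add]
      simp [ContinuousLinearMap.comp_apply]
    set Q : (X →L[ℝ] ℝ) × ((X →L[ℝ] ℝ) →L[ℝ] ℝ) :=
      (w.2 + q1, inclusionInDoubleDual ℝ X w.1 + q2) with hQdef
    have hconjQ : conj h Q ≤ ((q1 w.1 + q2 w.2 + w.2 w.1 - c : ℝ) : EReal) := by
      unfold conj
      refine iSup_le fun s => ?_
      set B : ℝ := q1 w.1 + q2 w.2 + w.2 w.1 - c with hBdef
      have key : ((Q.1 s.1 + Q.2 s.2 - B : ℝ) : EReal) ≤ h s := by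
        have h1 := hΦ1 (s.1 - w.1, s.2 - w.2)
        rw [hsplit] at h1
        have h2 : transl h w (s.1 - w.1, s.2 - w.2)
            = h s - ((w.2 (s.1 - w.1) + (s.2 - w.2) w.1 + w.2 w.1 : ℝ) : EReal) := by
          unfold transl
          simp only [sub_add_cancel, Prod.mk.eta]
        rw [h2] at h1
        rw [EReal.le_sub_iff_add_le (Or.inl (EReal.coe_ne_bot _))
          (Or.inl (EReal.coe_ne_top _)), ← EReal.coe_add] at h1
        refine le_trans (le_of_eq ?_) h1
        rw [EReal.coe_eq_coe_iff]
        simp only [hQdef, hBdef, ContinuousLinearMap.add_apply, map_sub,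
          ContinuousLinearMap.sub_apply, dual_def]
        ring
      calc ((Q.1 s.1 + Q.2 s.2 : ℝ) : EReal) - h s
          ≤ ((Q.1 s.1 + Q.2 s.2 : ℝ) : EReal) - ((Q.1 s.1 + Q.2 s.2 - B : ℝ) : EReal) :=
            EReal.sub_le_sub le_rfl key
        _ = ((B : ℝ) : EReal) := by rw [← EReal.coe_sub, EReal.coe_eq_coe_iff]; ring
    have hQQ := hπs Q
    have hreal : Q.2 Q.1 ≤ q1 w.1 + q2 w.2 + w.2 w.1 - c := by
      have := le_trans hQQ hconjQ
      exact_mod_cast this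
    have hc2 : q2 q1 ≤ -c := by
      simp only [hQdef, ContinuousLinearMap.add_apply, map_add, dual_def] at hreal
      linarith
    -- final contradiction
    set S : ℝ := ‖q1‖ + ‖q2‖ with hS
    have hSnn : 0 ≤ S := by positivity
    set δ : ℝ := μ / (2 * (S + 1)) with hδdef
    have hδpos : 0 < δ := by positivity
    obtain ⟨x, hx⟩ := approx_dual q1 hδpos
    obtain ⟨y, hy⟩ := approx_dual q2 hδpos
    have h5 := hΦ2 (x, y)
    rw [hsplit] at h5
    have hq2q1 : ‖q2 q1‖ ≤ ‖q2‖ * ‖q1‖ := q2.le_opNorm q1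
    rw [Real.norm_eq_abs] at hq2q1
    have hSδ : S * δ < μ := by
      rw [hδdef, mul_div_assoc']
      rw [div_lt_iff₀ (by positivity)]
      nlinarith
    have hfin1 : μ - (‖x‖ ^ 2 / 2 + ‖y‖ ^ 2 / 2) ≤ q1 x + q2 y + c := h5
    have hfin2 : c ≤ ‖q2‖ * ‖q1‖ := by
      have := neg_abs_le (q2 q1)
      linarith
    have hSδ' : ‖q1‖ * δ + ‖q2‖ * δ < μ := by
      have he : S * δ = ‖q1‖ * δ + ‖q2‖ * δ := by rw [hS]; ring
      linarith
    linarith [hx, hy, sq_nonneg (‖q1‖ - ‖q2‖), hSδ']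
  · intro haux
    have hπ : ∀ p : X × (X →L[ℝ] ℝ), ((p.2 p.1 : ℝ) : EReal) ≤ h p := by
      intro s
      have h0 := haux s
      have h1 : (0 : EReal) ≤ transl h s 0 + ((‖(0 : X × (X →L[ℝ] ℝ)).1‖ ^ 2 / 2
          + ‖(0 : X × (X →L[ℝ] ℝ)).2‖ ^ 2 / 2 : ℝ) : EReal) := h0 ▸ iInf_le _ 0
      have h2 : transl h s 0 = h s - ((s.2 s.1 : ℝ) : EReal) := by
        unfold transl
        simp only [Prod.fst_zero, Prod.snd_zero, zero_add, map_zero,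
          ContinuousLinearMap.zero_apply, Prod.mk.eta]
      rw [h2] at h1
      simp only [Prod.fst_zero, Prod.snd_zero, norm_zero] at h1
      norm_num at h1
      rwa [EReal.le_sub_iff_add_le (Or.inl (EReal.coe_ne_bot _))
        (Or.inl (EReal.coe_ne_top _)), zero_add] at h1
    refine ⟨hπ, ?_⟩
    rintro ⟨y1, y2⟩
    simp only
    by_contra hcon
    push_neg at hcon
    obtain ⟨z, hz1, hz2⟩ := EReal.exists_between_coe_real hcon
    have hz2' : z < y2 y1 := by exact_mod_cast hz2
    set ε : ℝ := y2 y1 - z with hε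
    have hεpos : 0 < ε := by simp only [hε]; linarith
    set δ : ℝ := ε / (2 * (‖y2‖ + 1)) with hδdef
    have hδpos : 0 < δ := by positivity
    obtain ⟨sstar, hsstar⟩ := approx_dual (-y2) hδpos
    rw [norm_neg] at hsstar
    simp only [ContinuousLinearMap.neg_apply] at hsstar
    set w : X × (X →L[ℝ] ℝ) := (0, y1 + sstar) with hw
    have h0 := haux w
    have hlt : (⨅ p : X × (X →L[ℝ] ℝ),
        (transl h w p + ((‖p.1‖ ^ 2 / 2 + ‖p.2‖ ^ 2 / 2 : ℝ) : EReal))) < ((ε/2 : ℝ) : EReal) := by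
      rw [h0]
      exact_mod_cast (by positivity : (0:ℝ) < ε/2)
    obtain ⟨p, hp⟩ := iInf_lt_iff.1 hlt
    have htransl : transl h w p = h (p.1, p.2 + (y1 + sstar))
        - ((y1 p.1 + sstar p.1 : ℝ) : EReal) := by
      unfold transl
      simp only [hw, add_zero, map_zero, ContinuousLinearMap.add_apply,
        ContinuousLinearMap.zero_apply]
    have htop : h (p.1, p.2 + (y1 + sstar)) ≠ ⊤ := by
      intro hcc
      rw [htransl, hcc, EReal.top_sub_coe] at hp
      have h3 : (⊤ : EReal) + ((‖p.1‖ ^ 2 / 2 + ‖p.2‖ ^ 2 / 2 : ℝ) : EReal) = ⊤ :=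
        EReal.top_add_of_ne_bot (EReal.coe_ne_bot _)
      rw [h3] at hp
      exact (not_top_lt) hp
    set ρ : ℝ := (h (p.1, p.2 + (y1 + sstar))).toReal with hρdef
    have hρ : h (p.1, p.2 + (y1 + sstar)) = (ρ : EReal) :=
      (EReal.coe_toReal htop (hbot _)).symm
    have hreal : ρ - (y1 p.1 + sstar p.1) + (‖p.1‖ ^ 2 / 2 + ‖p.2‖ ^ 2 / 2) < ε/2 := by
      have h4 : transl h w p + ((‖p.1‖ ^ 2 / 2 + ‖p.2‖ ^ 2 / 2 : ℝ) : EReal)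
          = ((ρ - (y1 p.1 + sstar p.1) + (‖p.1‖ ^ 2 / 2 + ‖p.2‖ ^ 2 / 2) : ℝ) : EReal) := by
        rw [htransl, hρ, ← EReal.coe_sub, ← EReal.coe_add]
      rw [h4] at hp
      exact_mod_cast hp
    have hsup : ((y1 p.1 + y2 (p.2 + (y1 + sstar)) - ρ : ℝ) : EReal) ≤ conj h (y1, y2) := by
      have h5 := le_iSup (fun s : X × (X →L[ℝ] ℝ) =>
        ((y1 s.1 + y2 s.2 : ℝ) : EReal) - h s) (p.1, p.2 + (y1 + sstar))
      simp only at h5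
      rw [hρ, ← EReal.coe_sub] at h5
      exact h5
    have hlt2 : y1 p.1 + y2 (p.2 + (y1 + sstar)) - ρ < z := by
      exact_mod_cast lt_of_le_of_lt hsup hz1
    -- expand and derive contradiction
    have hexp : y2 (p.2 + (y1 + sstar)) = y2 p.2 + y2 y1 + y2 sstar := by
      rw [map_add, map_add]; ring
    rw [hexp] at hlt2
    have hb1 : |sstar p.1| ≤ ‖sstar‖ * ‖p.1‖ := by
      have := sstar.le_opNorm p.1; rwa [Real.norm_eq_abs] at this
    have hb2 : |y2 p.2| ≤ ‖y2‖ * ‖p.2‖ := by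
      have := y2.le_opNorm p.2; rwa [Real.norm_eq_abs] at this
    have hδb : ‖y2‖ * δ ≤ ε/2 := by
      rw [hδdef, mul_div_assoc', div_le_div_iff₀ (by positivity) (by positivity)]
      nlinarith [norm_nonneg y2, hεpos]
    have hzval : z = y2 y1 - ε := by rw [hε]; ring
    linarith [hreal, hsstar, hlt2, le_abs_self (sstar p.1), neg_abs_le (y2 p.2), hb1, hb2,
      sq_nonneg (‖sstar‖ - ‖p.1‖), sq_nonneg (‖y2‖ - ‖p.2‖), hδb, hzval]

end
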